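/- Let z_x = γX + τ and z_y = γY + τ, where (X, Y) is bivariate normal with mean 0, unit variances, correlation ρ, and τ ~ Uniform(0, 2π) independent of (X, Y). Then the joint density of (z_x, z_y) is f(t_x, t_y) = (1/(2π)) φ_{√(2(1−ρ))γ}(t_x − t_y) [Φ((4π − (t_x + t_y))/(γ√(2(1+ρ)))) − Φ(−(t_x + t_y)/(γ√(2(1+ρ))))], where φ_σ is the N(0, σ²) density and Φ is the standard normal CDF. -/

import Mathlib

open MeasureTheory ProbabilityTheory Real Set
open scoped ENNReal NNReal

/-- The standard normal cumulative distribution function. -/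
noncomputable def stdNormalCDF (t : ℝ) : ℝ :=
  ∫ z in Set.Iic t, (Real.sqrt (2 * π))⁻¹ * Real.exp (-z ^ 2 / 2)

/-- The N(0, σ²) density. -/
noncomputable def gaussDensity (σ t : ℝ) : ℝ :=
  (Real.sqrt (2 * π) * σ)⁻¹ * Real.exp (-t ^ 2 / (2 * σ ^ 2))

/-- The uniform distribution on (0, 2π). -/
noncomputable def uniform02pi : Measure ℝ :=
  (ENNReal.ofReal (2 * π))⁻¹ • volume.restrict (Set.Ioo 0 (2 * π))

lemma integrable_stdgauss : Integrable (fun z : ℝ => (Real.sqrt (2 * π))⁻¹ * Real.exp (-z ^ 2 / 2)) := by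
  have h := integrable_exp_neg_mul_sq (b := (1:ℝ)/2) (by norm_num)
  have : (fun z : ℝ => Real.exp (-z ^ 2 / 2)) = fun z : ℝ => Real.exp (-(1/2) * z ^ 2) := by
    funext z; ring_nf
  exact ((this ▸ h).const_mul _)

lemma stdNormalCDF_diff {a b : ℝ} :
    stdNormalCDF b - stdNormalCDF a
      = ∫ z in a..b, (Real.sqrt (2 * π))⁻¹ * Real.exp (-z ^ 2 / 2) := by
  unfold stdNormalCDF
  exact intervalIntegral.integral_Iic_sub_Iic integrable_stdgauss.integrableOn
    integrable_stdgauss.integrableOn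

lemma lintegral_comp_affine {a : ℝ} (ha : a ≠ 0) (b : ℝ) {f : ℝ → ℝ≥0∞} (hf : Measurable f) :
    ∫⁻ x, f (a * x + b) = ENNReal.ofReal |a|⁻¹ * ∫⁻ x, f x := by
  have hmap : Measure.map (fun x : ℝ => a * x + b) volume
      = ENNReal.ofReal |a⁻¹| • volume := by
    have h1 : (fun x : ℝ => a * x + b) = (fun x : ℝ => x + b) ∘ (fun x : ℝ => a * x) := rfl
    rw [h1, ← Measure.map_map (measurable_add_const b) (measurable_const_mul a)]
    rw [Real.map_volume_mul_left ha, Measure.map_smul, map_add_right_eq_self]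
  have h2 : ∫⁻ x, f (a * x + b) = ∫⁻ y, f y ∂(Measure.map (fun x : ℝ => a * x + b) volume) :=
    (lintegral_map hf ((measurable_const_mul a).add_const b)).symm
  rw [h2, hmap, lintegral_smul_measure, abs_inv, smul_eq_mul]

lemma sqrt_two_pi_pos : (0:ℝ) < Real.sqrt (2*π) := Real.sqrt_pos.2 (by positivity)

lemma gauss_strip {σ : ℝ} (hσ : 0 < σ) (s : ℝ) :
    ∫ τ in Set.Ioo 0 (2*π), Real.exp (-(s - 2*τ)^2 / (2*σ^2))
      = σ * Real.sqrt (2*π) / 2 *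
        (stdNormalCDF ((4*π - s)/σ) - stdNormalCDF (-s/σ)) := by
  have hπ : (0:ℝ) < 2*π := by positivity
  have h0 : ∫ τ in Set.Ioo 0 (2*π), Real.exp (-(s - 2*τ)^2 / (2*σ^2))
      = ∫ τ in (0:ℝ)..(2*π), Real.exp (-(s - 2*τ)^2 / (2*σ^2)) := by
    rw [intervalIntegral.integral_of_le hπ.le, integral_Ioc_eq_integral_Ioo]
  have h1 : ∫ τ in (0:ℝ)..(2*π), Real.exp (-(s - 2*τ)^2 / (2*σ^2))
      = (2:ℝ)⁻¹ • ∫ u in (0:ℝ)..(4*π), Real.exp (-(s - u)^2 / (2*σ^2)) := by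
    have h := intervalIntegral.integral_comp_mul_left (a := (0:ℝ)) (b := 2*π)
      (c := (2:ℝ)) (fun u => Real.exp (-(s - u)^2 / (2*σ^2))) two_ne_zero
    rw [h, show (2:ℝ)*0 = 0 by ring, show (2:ℝ)*(2*π) = 4*π by ring]
  have h2 : ∫ u in (0:ℝ)..(4*π), Real.exp (-(s - u)^2 / (2*σ^2))
      = ∫ w in (s - 4*π)..(s - 0), Real.exp (-w^2 / (2*σ^2)) :=
    intervalIntegral.integral_comp_sub_left (a := (0:ℝ)) (b := 4*π)
      (fun w => Real.exp (-w^2 / (2*σ^2))) s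
  have hfun : ∀ w : ℝ, Real.exp (-w^2 / (2*σ^2)) = Real.exp (-(w/σ)^2 / 2) := by
    intro w
    congr 1
    rw [div_pow]
    field_simp
  have h3 : ∫ w in (s - 4*π)..s, Real.exp (-w^2 / (2*σ^2))
      = σ • ∫ v in ((s - 4*π)/σ)..(s/σ), Real.exp (-v^2 / 2) := by
    have h := intervalIntegral.integral_comp_div (a := s - 4*π) (b := s)
      (c := σ) (fun v => Real.exp (-v^2 / 2)) hσ.ne'
    rw [← h]
    exact intervalIntegral.integral_congr (fun w _ => hfun w)
  have h4 : ∫ v in ((s - 4*π)/σ)..(s/σ), Real.exp (-v^2 / 2)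
      = ∫ v in (-s/σ)..((4*π - s)/σ), Real.exp (-v^2 / 2) := by
    have h := intervalIntegral.integral_comp_neg (a := -(s/σ)) (b := -((s - 4*π)/σ))
      (fun v => Real.exp (-v^2 / 2))
    simp only [neg_neg, neg_sq] at h
    rw [← h]
    congr 1
    · ring
    · ring
  have h5 : ∫ v in (-s/σ)..((4*π - s)/σ), Real.exp (-v^2 / 2)
      = Real.sqrt (2*π) * (stdNormalCDF ((4*π - s)/σ) - stdNormalCDF (-s/σ)) := by
    rw [stdNormalCDF_diff, intervalIntegral.integral_const_mul]
    rw [← mul_assoc, mul_inv_cancel₀ sqrt_two_pi_pos.ne', one_mul]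
  rw [h0, h1, h2, sub_zero, h3, h4, h5, smul_eq_mul, smul_eq_mul]
  ring

lemma pdf_product {γ ρ : ℝ} (hγ : 0 < γ) (hρ : ρ ∈ Set.Ioo (-1:ℝ) 1) (tx ty τ : ℝ) :
    gaussianPDFReal 0 1 ((tx - τ)/γ) *
      gaussianPDFReal 0 1 ((ty - τ - ρ*(tx - τ))/(γ * Real.sqrt (1 - ρ^2)))
      = (2*π)⁻¹ * Real.exp (-(tx - ty)^2 / (2 * (Real.sqrt (2*(1-ρ)) * γ)^2)) *
        Real.exp (-((tx + ty) - 2*τ)^2 / (2 * (γ * Real.sqrt (2*(1+ρ)))^2)) := by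
  have h1 : (0:ℝ) < 1 - ρ := by linarith [hρ.2]
  have h2 : (0:ℝ) < 1 + ρ := by linarith [hρ.1]
  have hc : (0:ℝ) < 1 - ρ^2 := by nlinarith [hρ.1, hρ.2]
  have hcs : (Real.sqrt (1 - ρ^2))^2 = 1 - ρ^2 := Real.sq_sqrt hc.le
  have hcp : (0:ℝ) < Real.sqrt (1 - ρ^2) := Real.sqrt_pos.2 hc
  have hs1 : (Real.sqrt (2*(1-ρ)))^2 = 2*(1-ρ) := Real.sq_sqrt (by positivity)
  have hs2 : (Real.sqrt (2*(1+ρ)))^2 = 2*(1+ρ) := Real.sq_sqrt (by positivity)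
  unfold gaussianPDFReal
  push_cast
  rw [mul_one, mul_one]
  have hconst : (Real.sqrt (2*π))⁻¹ * (Real.sqrt (2*π))⁻¹ = (2*π)⁻¹ := by
    rw [← mul_inv, Real.mul_self_sqrt (by positivity)]
  calc (Real.sqrt (2*π))⁻¹ * Real.exp (-((tx - τ)/γ - 0)^2 / 2) *
        ((Real.sqrt (2*π))⁻¹ *
          Real.exp (-((ty - τ - ρ*(tx - τ))/(γ * Real.sqrt (1 - ρ^2)) - 0)^2 / 2))
      = (2*π)⁻¹ * (Real.exp (-((tx - τ)/γ - 0)^2 / 2) *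
          Real.exp (-((ty - τ - ρ*(tx - τ))/(γ * Real.sqrt (1 - ρ^2)) - 0)^2 / 2)) := by
        rw [← hconst]; ring
    _ = (2*π)⁻¹ * (Real.exp (-(tx - ty)^2 / (2 * (Real.sqrt (2*(1-ρ)) * γ)^2)) *
          Real.exp (-((tx + ty) - 2*τ)^2 / (2 * (γ * Real.sqrt (2*(1+ρ)))^2))) := by
        rw [← Real.exp_add, ← Real.exp_add]
        congr 2
        rw [sub_zero, sub_zero, div_pow, div_pow, mul_pow, mul_pow, mul_pow,
          hcs, hs1, hs2]
        have hγ2 : γ^2 ≠ 0 := by positivity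
        have hc' : 1 - ρ^2 ≠ 0 := hc.ne'
        have h1' : 1 - ρ ≠ 0 := h1.ne'
        have h2' : 1 + ρ ≠ 0 := h2.ne'
        field_simp
        ring
    _ = (2*π)⁻¹ * Real.exp (-(tx - ty)^2 / (2 * (Real.sqrt (2*(1-ρ)) * γ)^2)) *
        Real.exp (-((tx + ty) - 2*τ)^2 / (2 * (γ * Real.sqrt (2*(1+ρ)))^2)) := by ring

lemma tau_lintegral {γ ρ : ℝ} (hγ : 0 < γ) (hρ : ρ ∈ Set.Ioo (-1:ℝ) 1) (tx ty : ℝ) :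
    ∫⁻ τ : ℝ, ((ENNReal.ofReal (2*π))⁻¹ * (Set.Ioo (0:ℝ) (2*π)).indicator 1 τ)
        * (ENNReal.ofReal (gaussianPDFReal 0 1 ((tx - τ)/γ)) *
           ENNReal.ofReal (gaussianPDFReal 0 1 ((ty - τ - ρ*(tx - τ))/(γ * Real.sqrt (1 - ρ^2)))))
      = ENNReal.ofReal ((γ^2 * Real.sqrt (1 - ρ^2)) * ((2*π)⁻¹ *
          gaussDensity (Real.sqrt (2*(1-ρ)) * γ) (tx - ty) *
          (stdNormalCDF ((4*π - (tx + ty))/(γ * Real.sqrt (2*(1+ρ)))) -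
           stdNormalCDF (-(tx + ty)/(γ * Real.sqrt (2*(1+ρ))))))) := by
  have h1 : (0:ℝ) < 1 - ρ := by linarith [hρ.2]
  have h2 : (0:ℝ) < 1 + ρ := by linarith [hρ.1]
  have hc : (0:ℝ) < 1 - ρ^2 := by nlinarith [hρ.1, hρ.2]
  have hcp : (0:ℝ) < Real.sqrt (1 - ρ^2) := Real.sqrt_pos.2 hc
  have hπ : (0:ℝ) < 2*π := by positivity
  set σ₂ : ℝ := γ * Real.sqrt (2*(1+ρ)) with hσ₂def
  have hσ₂ : 0 < σ₂ := by positivity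
  set σ₁ : ℝ := Real.sqrt (2*(1-ρ)) * γ with hσ₁def
  have hσ₁ : 0 < σ₁ := by positivity
  -- the real-valued integrand on (0, 2π)
  set A : ℝ := (2*π)⁻¹ * ((2*π)⁻¹ * Real.exp (-(tx - ty)^2 / (2 * σ₁^2))) with hA
  have hA0 : 0 ≤ A := by positivity
  -- step 1: pointwise rewrite of the integrand as an indicator
  have hpt : ∀ τ : ℝ, ((ENNReal.ofReal (2*π))⁻¹ * (Set.Ioo (0:ℝ) (2*π)).indicator 1 τ)
        * (ENNReal.ofReal (gaussianPDFReal 0 1 ((tx - τ)/γ)) *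
           ENNReal.ofReal (gaussianPDFReal 0 1 ((ty - τ - ρ*(tx - τ))/(γ * Real.sqrt (1 - ρ^2)))))
      = (Set.Ioo (0:ℝ) (2*π)).indicator
          (fun τ => ENNReal.ofReal (A * Real.exp (-((tx + ty) - 2*τ)^2 / (2 * σ₂^2)))) τ := by
    intro τ
    by_cases h : τ ∈ Set.Ioo (0:ℝ) (2*π)
    · rw [Set.indicator_of_mem h, Set.indicator_of_mem h, Pi.one_apply, mul_one,
        ← ENNReal.ofReal_mul (gaussianPDFReal_nonneg 0 1 _), pdf_product hγ hρ tx ty τ,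
        ← ENNReal.ofReal_inv_of_pos hπ,
        ← ENNReal.ofReal_mul (by positivity)]
      congr 1
      rw [hA]
      ring
    · rw [Set.indicator_of_notMem h, Set.indicator_of_notMem h, mul_zero, zero_mul]
  rw [lintegral_congr hpt, lintegral_indicator measurableSet_Ioo]
  -- step 2: set-lintegral to Bochner integral
  have hcont : Continuous (fun τ : ℝ => A * Real.exp (-((tx + ty) - 2*τ)^2 / (2 * σ₂^2))) := by
    fun_prop
  have hint : IntegrableOn (fun τ : ℝ => A * Real.exp (-((tx + ty) - 2*τ)^2 / (2 * σ₂^2)))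
      (Set.Ioo 0 (2*π)) volume :=
    (hcont.integrableOn_Icc (a := 0) (b := 2*π)).mono_set Set.Ioo_subset_Icc_self
  rw [← ofReal_integral_eq_lintegral_ofReal hint
      (Filter.Eventually.of_forall (fun τ => by positivity))]
  congr 1
  rw [integral_const_mul, gauss_strip hσ₂ (tx + ty)]
  -- step 3: the scalar identity
  have hs2π : Real.sqrt (2*π) ^ 2 = 2*π := Real.sq_sqrt hπ.le
  have hσ₁σ₂ : σ₁ * σ₂ = 2 * γ^2 * Real.sqrt (1 - ρ^2) := by
    rw [hσ₁def, hσ₂def]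
    rw [show Real.sqrt (2*(1-ρ)) * γ * (γ * Real.sqrt (2*(1+ρ)))
        = γ^2 * (Real.sqrt (2*(1-ρ)) * Real.sqrt (2*(1+ρ))) by ring,
      ← Real.sqrt_mul (by positivity),
      show (2*(1-ρ)) * (2*(1+ρ)) = 2^2 * (1 - ρ^2) by ring,
      Real.sqrt_mul (by positivity), Real.sqrt_sq (by norm_num)]
    ring
  rw [hA, gaussDensity]
  have hne : Real.sqrt (2*π) ≠ 0 := sqrt_two_pi_pos.ne'
  have h2π' : (Real.sqrt 2 * Real.sqrt π)^2 = 2*π := by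
    rw [mul_pow, Real.sq_sqrt (by norm_num : (0:ℝ) ≤ 2), Real.sq_sqrt Real.pi_pos.le]
  set q := Real.sqrt (2*π) with hqdef
  rw [show γ^2 * Real.sqrt (1 - ρ^2) = σ₁*σ₂/2 by rw [hσ₁σ₂]; ring, ← hs2π]
  field_simp

lemma prod_withDensity' {α β : Type*} [MeasurableSpace α] [MeasurableSpace β]
    {μ : Measure α} {ν : Measure β} [SigmaFinite μ] [SigmaFinite ν]
    {f : α → ℝ≥0∞} {g : β → ℝ≥0∞} (hf : Measurable f) (hg : Measurable g)
    [SigmaFinite (μ.withDensity f)] [SigmaFinite (ν.withDensity g)] :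
    (μ.withDensity f).prod (ν.withDensity g)
      = (μ.prod ν).withDensity (fun p => f p.1 * g p.2) := by
  refine Measure.prod_eq (fun s t hs ht => ?_)
  rw [withDensity_apply _ (hs.prod ht), ← lintegral_indicator (hs.prod ht)]
  have hind : ∀ p : α × β, (s ×ˢ t).indicator (fun p => f p.1 * g p.2) p
      = s.indicator f p.1 * t.indicator g p.2 := by
    intro p
    by_cases h1 : p.1 ∈ s <;> by_cases h2 : p.2 ∈ t <;>
      simp [Set.indicator_apply, Set.mem_prod, h1, h2]
  rw [lintegral_congr hind,
    lintegral_prod_mul (hf.indicator hs).aemeasurable (hg.indicator ht).aemeasurable,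
    lintegral_indicator hs, lintegral_indicator ht,
    withDensity_apply _ hs, withDensity_apply _ ht]

lemma uniform_eq : uniform02pi
    = volume.withDensity
        (fun τ => (ENNReal.ofReal (2*π))⁻¹ * (Set.Ioo (0:ℝ) (2*π)).indicator 1 τ) := by
  have h : (fun τ => (ENNReal.ofReal (2*π))⁻¹ * (Set.Ioo (0:ℝ) (2*π)).indicator 1 τ)
      = (Set.Ioo (0:ℝ) (2*π)).indicator (fun _ => (ENNReal.ofReal (2*π))⁻¹) := by
    funext τ
    by_cases h : τ ∈ Set.Ioo (0:ℝ) (2*π) <;> simp [Set.indicator_apply, h]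
  rw [uniform02pi, h, withDensity_indicator measurableSet_Ioo, withDensity_const]

lemma monotone_stdNormalCDF : Monotone stdNormalCDF := by
  intro a b hab
  unfold stdNormalCDF
  refine setIntegral_mono_set integrable_stdgauss.integrableOn
    (Filter.Eventually.of_forall fun z => by positivity)
    (HasSubset.Subset.eventuallyLE (Set.Iic_subset_Iic.2 hab))

lemma measurable_stdNormalCDF : Measurable stdNormalCDF :=
  monotone_stdNormalCDF.measurable

lemma measurable_gaussDensity (σ : ℝ) : Measurable (gaussDensity σ) := by
  unfold gaussDensity; fun_prop

instance : IsFiniteMeasure uniform02pi := by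
  constructor
  rw [uniform02pi, Measure.smul_apply, Measure.restrict_apply_univ, Real.volume_Ioo,
    smul_eq_mul]
  exact ENNReal.mul_lt_top (ENNReal.inv_lt_top.2 (by simp [Real.pi_pos])) ENNReal.ofReal_lt_top

theorem stmt6 (γ ρ : ℝ) (hγ : 0 < γ) (hρ : ρ ∈ Set.Ioo (-1 : ℝ) 1) :
    Measure.map (fun p : (ℝ × ℝ) × ℝ =>
        (γ * p.1.1 + p.2,
         γ * (ρ * p.1.1 + Real.sqrt (1 - ρ ^ 2) * p.1.2) + p.2))
      (((gaussianReal 0 1).prod (gaussianReal 0 1)).prod uniform02pi) =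
    (volume : Measure (ℝ × ℝ)).withDensity (fun q =>
      ENNReal.ofReal ((2 * π)⁻¹ *
        gaussDensity (Real.sqrt (2 * (1 - ρ)) * γ) (q.1 - q.2) *
        (stdNormalCDF ((4 * π - (q.1 + q.2)) / (γ * Real.sqrt (2 * (1 + ρ)))) -
         stdNormalCDF (-(q.1 + q.2) / (γ * Real.sqrt (2 * (1 + ρ))))))) := by
  obtain ⟨hρ1, hρ2⟩ := hρ
  have hcpos : (0:ℝ) < 1 - ρ^2 := by nlinarith
  set c : ℝ := Real.sqrt (1 - ρ^2) with hcdef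
  have hcp : 0 < c := Real.sqrt_pos.2 hcpos
  have hγc : γ * c ≠ 0 := by positivity
  set pdf : ℝ → ℝ≥0∞ := fun x => ENNReal.ofReal (gaussianPDFReal 0 1 x) with hpdfdef
  have hpdfm : Measurable pdf := (measurable_gaussianPDFReal 0 1).ennreal_ofReal
  set k : ℝ → ℝ≥0∞ :=
    fun τ => (ENNReal.ofReal (2*π))⁻¹ * (Set.Ioo (0:ℝ) (2*π)).indicator 1 τ with hkdef
  have hkm : Measurable k :=
    measurable_const.mul (measurable_one.indicator measurableSet_Ioo)
  have hGdef : gaussianReal 0 1 = volume.withDensity pdf :=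
    gaussianReal_of_var_ne_zero 0 one_ne_zero
  -- the target density
  set densE : ℝ × ℝ → ℝ≥0∞ := fun q =>
      ENNReal.ofReal ((2 * π)⁻¹ *
        gaussDensity (Real.sqrt (2 * (1 - ρ)) * γ) (q.1 - q.2) *
        (stdNormalCDF ((4 * π - (q.1 + q.2)) / (γ * Real.sqrt (2 * (1 + ρ)))) -
         stdNormalCDF (-(q.1 + q.2) / (γ * Real.sqrt (2 * (1 + ρ)))))) with hdensdef
  have hdensm : Measurable densE := by
    apply ENNReal.measurable_ofReal.comp
    apply Measurable.mul
    · exact measurable_const.mul ((measurable_gaussDensity _).comp (by fun_prop))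
    · exact (measurable_stdNormalCDF.comp (by fun_prop)).sub
        (measurable_stdNormalCDF.comp (by fun_prop))
  -- measure rewriting
  haveI hsf1 : SigmaFinite (volume.withDensity pdf) := by
    rw [← hGdef]; infer_instance
  have hprod1 : (gaussianReal 0 1).prod (gaussianReal 0 1)
      = (volume.prod volume).withDensity (fun a : ℝ × ℝ => pdf a.1 * pdf a.2) := by
    rw [hGdef]; exact prod_withDensity' hpdfm hpdfm
  haveI hsf2 : SigmaFinite ((volume.prod volume).withDensity
      (fun a : ℝ × ℝ => pdf a.1 * pdf a.2)) := by
    rw [← hprod1]; infer_instance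
  haveI hsf3 : SigmaFinite (volume.withDensity k) := by
    rw [← uniform_eq]; infer_instance
  have hprod2 : ((gaussianReal 0 1).prod (gaussianReal 0 1)).prod uniform02pi
      = ((volume.prod volume).prod volume).withDensity
          (fun p : (ℝ × ℝ) × ℝ => (pdf p.1.1 * pdf p.1.2) * k p.2) := by
    rw [hprod1, uniform_eq]
    exact prod_withDensity' (hpdfm.comp measurable_fst |>.mul (hpdfm.comp measurable_snd)) hkm
  set T : (ℝ × ℝ) × ℝ → ℝ × ℝ := fun p =>
      (γ * p.1.1 + p.2, γ * (ρ * p.1.1 + c * p.1.2) + p.2) with hTdef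
  have hTm : Measurable T := by fun_prop
  ext E hE
  set J : ℝ × ℝ → ℝ≥0∞ := E.indicator (fun _ => 1) with hJdef
  have hJm : Measurable J := measurable_const.indicator hE
  rw [Measure.map_apply hTm hE, hprod2, withDensity_apply _ (hTm hE),
    ← lintegral_indicator (hTm hE)]
  have hind : ∀ p : (ℝ × ℝ) × ℝ,
      (T ⁻¹' E).indicator (fun p : (ℝ × ℝ) × ℝ => (pdf p.1.1 * pdf p.1.2) * k p.2) p
        = ((pdf p.1.1 * pdf p.1.2) * k p.2) * J (T p) := by
    intro p
    by_cases h : T p ∈ E <;>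
      simp [hJdef, Set.indicator_apply, Set.mem_preimage, h]
  rw [lintegral_congr hind]
  -- the full integrand is measurable
  have hFm : Measurable (fun p : (ℝ × ℝ) × ℝ =>
      ((pdf p.1.1 * pdf p.1.2) * k p.2) * J (T p)) := by
    exact (((hpdfm.comp (measurable_fst.comp measurable_fst)).mul
      (hpdfm.comp (measurable_snd.comp measurable_fst))).mul
      (hkm.comp measurable_snd)).mul (hJm.comp hTm)
  rw [lintegral_prod_symm _ hFm.aemeasurable]
  -- inner double integral as a function of the pair (tx, ty)
  set g2 : ℝ → ℝ → ℝ≥0∞ := fun τ tx =>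
      pdf ((tx - τ)/γ) * ∫⁻ ty, pdf ((ty - τ - ρ*(tx - τ))/(γ*c)) * J (tx, ty) with hg2def
  have hg2m : ∀ τ, Measurable (g2 τ) := by
    intro τ
    apply (hpdfm.comp (by fun_prop)).mul
    exact Measurable.lintegral_prod_right'
      (f := fun q : ℝ × ℝ => pdf ((q.2 - τ - ρ*(q.1 - τ))/(γ*c)) * J (q.1, q.2))
      ((hpdfm.comp (by fun_prop)).mul (hJm.comp (by fun_prop)))
  have stepA : ∀ τ : ℝ,
      (∫⁻ xz : ℝ × ℝ, ((pdf xz.1 * pdf xz.2) * k τ) * J (T (xz, τ)) ∂(volume.prod volume))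
        = k τ * (ENNReal.ofReal |γ*c|⁻¹ * (ENNReal.ofReal |γ|⁻¹ * ∫⁻ tx, g2 τ tx)) := by
    intro τ
    have measA : Measurable (fun xz : ℝ × ℝ => ((pdf xz.1 * pdf xz.2) * k τ) * J (T (xz, τ))) := by
      refine (((hpdfm.comp measurable_fst).mul (hpdfm.comp measurable_snd)).mul
        measurable_const).mul (hJm.comp (hTm.comp ?_))
      exact measurable_id.prodMk measurable_const
    rw [lintegral_prod _ measA.aemeasurable]
    -- inner z-integral
    have hz : ∀ x : ℝ, (∫⁻ z, ((pdf x * pdf z) * k τ) * J (T ((x, z), τ)))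
        = (k τ * pdf x) * (ENNReal.ofReal |γ*c|⁻¹ *
            ∫⁻ ty, pdf ((ty - (γ*ρ*x + τ))/(γ*c)) * J (γ*x + τ, ty)) := by
      intro x
      have mty : Measurable (fun t : ℝ => pdf ((t - (γ*ρ*x + τ))/(γ*c)) * J (γ*x + τ, t)) :=
        (hpdfm.comp (by fun_prop)).mul (hJm.comp (by fun_prop))
      have hfn : ∀ z : ℝ, ((pdf x * pdf z) * k τ) * J (T ((x, z), τ))
          = (k τ * pdf x) * ((fun t => pdf ((t - (γ*ρ*x + τ))/(γ*c)) * J (γ*x + τ, t))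
              ((γ*c)*z + (γ*ρ*x + τ))) := by
        intro z
        simp only [hTdef]
        have harg1 : ((γ*c)*z + (γ*ρ*x + τ) - (γ*ρ*x + τ))/(γ*c) = z := by
          field_simp
          ring
        have harg2 : (γ*c)*z + (γ*ρ*x + τ) = γ*(ρ*x + c*z) + τ := by ring
        rw [harg1, harg2]
        ring
      have mz : Measurable (fun z : ℝ =>
          (fun t : ℝ => pdf ((t - (γ*ρ*x + τ))/(γ*c)) * J (γ*x + τ, t))
            ((γ*c)*z + (γ*ρ*x + τ))) :=
        mty.comp ((measurable_id.const_mul (γ*c)).add_const (γ*ρ*x + τ))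
      rw [lintegral_congr hfn, lintegral_const_mul _ mz,
        lintegral_comp_affine hγc _ mty]
    rw [lintegral_congr hz]
    -- x-integral
    have hfn2 : ∀ x : ℝ, (k τ * pdf x) * (ENNReal.ofReal |γ*c|⁻¹ *
          ∫⁻ ty, pdf ((ty - (γ*ρ*x + τ))/(γ*c)) * J (γ*x + τ, ty))
        = (k τ * ENNReal.ofReal |γ*c|⁻¹) * ((fun tx => g2 τ tx) (γ*x + τ)) := by
      intro x
      simp only [hg2def]
      have h1 : (γ*x + τ - τ)/γ = x := by field_simp; ring
      have heq : (∫⁻ ty, pdf ((ty - τ - ρ*(γ*x + τ - τ))/(γ*c)) * J (γ*x + τ, ty))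
          = ∫⁻ ty, pdf ((ty - (γ*ρ*x + τ))/(γ*c)) * J (γ*x + τ, ty) := by
        refine lintegral_congr fun ty => ?_
        rw [show ty - τ - ρ*(γ*x + τ - τ) = ty - (γ*ρ*x + τ) by ring]
      rw [h1, heq]
      ring
    have mx : Measurable (fun x : ℝ => (fun tx => g2 τ tx) (γ*x + τ)) :=
      (hg2m τ).comp ((measurable_id.const_mul γ).add_const τ)
    rw [lintegral_congr hfn2, lintegral_const_mul _ mx,
      lintegral_comp_affine hγ.ne' τ (hg2m τ)]
    ring
  rw [lintegral_congr stepA]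
  -- measurability of (τ, tx) ↦ g2 τ tx
  have hMg2 : Measurable (fun p : ℝ × ℝ => g2 p.1 p.2) := by
    refine Measurable.mul (hpdfm.comp (by fun_prop)) ?_
    exact Measurable.lintegral_prod_right'
      (f := fun q : (ℝ × ℝ) × ℝ =>
        pdf ((q.2 - q.1.1 - ρ*(q.1.2 - q.1.1))/(γ*c)) * J (q.1.2, q.2))
      ((hpdfm.comp (by fun_prop)).mul (hJm.comp (by fun_prop)))
  have hMk : Measurable (fun τ : ℝ => ∫⁻ tx, k τ * g2 τ tx) :=
    Measurable.lintegral_prod_right'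
      (f := fun p : ℝ × ℝ => k p.1 * g2 p.1 p.2)
      ((hkm.comp measurable_fst).mul hMg2)
  have step2 : ∀ τ : ℝ,
      k τ * (ENNReal.ofReal |γ*c|⁻¹ * (ENNReal.ofReal |γ|⁻¹ * ∫⁻ tx, g2 τ tx))
        = (ENNReal.ofReal |γ*c|⁻¹ * ENNReal.ofReal |γ|⁻¹) * ∫⁻ tx, k τ * g2 τ tx := by
    intro τ
    rw [lintegral_const_mul _ (hg2m τ)]
    ring
  rw [lintegral_congr step2, lintegral_const_mul _ hMk]
  have hswap1 : (∫⁻ τ, ∫⁻ tx, k τ * g2 τ tx) = ∫⁻ tx, ∫⁻ τ, k τ * g2 τ tx :=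
    lintegral_lintegral_swap ((hkm.comp measurable_fst).mul hMg2).aemeasurable
  rw [hswap1]
  -- inner τ-integral for fixed tx
  have step3 : ∀ tx : ℝ, (∫⁻ τ, k τ * g2 τ tx)
      = ENNReal.ofReal (γ^2*c) * ∫⁻ ty, densE (tx, ty) * J (tx, ty) := by
    intro tx
    have hpush : ∀ τ : ℝ, k τ * g2 τ tx
        = ∫⁻ ty, (k τ * (pdf ((tx - τ)/γ) * pdf ((ty - τ - ρ*(tx - τ))/(γ*c)))) * J (tx, ty) := by
      intro τ
      have mty2 : Measurable (fun ty : ℝ => pdf ((ty - τ - ρ*(tx - τ))/(γ*c)) * J (tx, ty)) :=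
        (hpdfm.comp (by fun_prop)).mul (hJm.comp (by fun_prop))
      calc k τ * g2 τ tx
          = (k τ * pdf ((tx - τ)/γ)) *
              ∫⁻ ty, pdf ((ty - τ - ρ*(tx - τ))/(γ*c)) * J (tx, ty) := by
            simp only [hg2def]; ring
        _ = ∫⁻ ty, (k τ * pdf ((tx - τ)/γ)) *
              (pdf ((ty - τ - ρ*(tx - τ))/(γ*c)) * J (tx, ty)) :=
            (lintegral_const_mul _ mty2).symm
        _ = ∫⁻ ty, (k τ * (pdf ((tx - τ)/γ) * pdf ((ty - τ - ρ*(tx - τ))/(γ*c)))) * J (tx, ty) :=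
            lintegral_congr fun ty => by ring
    rw [lintegral_congr hpush]
    have hswap2 : (∫⁻ τ, ∫⁻ ty,
          (k τ * (pdf ((tx - τ)/γ) * pdf ((ty - τ - ρ*(tx - τ))/(γ*c)))) * J (tx, ty))
        = ∫⁻ ty, ∫⁻ τ,
          (k τ * (pdf ((tx - τ)/γ) * pdf ((ty - τ - ρ*(tx - τ))/(γ*c)))) * J (tx, ty) := by
      refine lintegral_lintegral_swap ?_
      refine Measurable.aemeasurable ?_
      exact ((hkm.comp measurable_fst).mul
        ((hpdfm.comp (by fun_prop)).mul (hpdfm.comp (by fun_prop)))).mul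
        (hJm.comp (by fun_prop))
    rw [hswap2]
    have hval : ∀ ty : ℝ, (∫⁻ τ,
          (k τ * (pdf ((tx - τ)/γ) * pdf ((ty - τ - ρ*(tx - τ))/(γ*c)))) * J (tx, ty))
        = (ENNReal.ofReal (γ^2*c) * densE (tx, ty)) * J (tx, ty) := by
      intro ty
      have mτ : Measurable (fun τ : ℝ =>
          k τ * (pdf ((tx - τ)/γ) * pdf ((ty - τ - ρ*(tx - τ))/(γ*c)))) :=
        hkm.mul ((hpdfm.comp (by fun_prop)).mul (hpdfm.comp (by fun_prop)))
      rw [lintegral_mul_const _ mτ]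
      congr 1
      simp only [hpdfdef, hkdef, hdensdef, hcdef]
      rw [tau_lintegral hγ ⟨hρ1, hρ2⟩ tx ty, ENNReal.ofReal_mul (by positivity)]
    rw [lintegral_congr hval]
    have hAC : ∀ ty : ℝ, (ENNReal.ofReal (γ^2*c) * densE (tx, ty)) * J (tx, ty)
        = ENNReal.ofReal (γ^2*c) * (densE (tx, ty) * J (tx, ty)) := fun ty => by ring
    have mdJ : Measurable (fun ty : ℝ => densE (tx, ty) * J (tx, ty)) :=
      (hdensm.comp (by fun_prop)).mul (hJm.comp (by fun_prop))
    rw [lintegral_congr hAC, lintegral_const_mul _ mdJ]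
  rw [lintegral_congr step3]
  have mOuter : Measurable (fun tx : ℝ => ∫⁻ ty, densE (tx, ty) * J (tx, ty)) :=
    Measurable.lintegral_prod_right'
      (f := fun q : ℝ × ℝ => densE (q.1, q.2) * J (q.1, q.2))
      ((hdensm.comp (by fun_prop)).mul (hJm.comp (by fun_prop)))
  rw [lintegral_const_mul _ mOuter]
  have hone : (ENNReal.ofReal |γ*c|⁻¹ * ENNReal.ofReal |γ|⁻¹) * ENNReal.ofReal (γ^2*c) = 1 := by
    rw [← ENNReal.ofReal_mul (by positivity), ← ENNReal.ofReal_mul (by positivity),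
      abs_of_pos (by positivity : (0:ℝ) < γ*c), abs_of_pos hγ,
      show (γ*c)⁻¹ * γ⁻¹ * (γ^2*c) = 1 by field_simp]
    exact ENNReal.ofReal_one
  rw [← mul_assoc, hone, one_mul]
  have hup : (∫⁻ tx, ∫⁻ ty, densE (tx, ty) * J (tx, ty))
      = ∫⁻ q, densE q * J q ∂(volume.prod volume) :=
    (lintegral_prod _ (hdensm.mul hJm).aemeasurable).symm
  rw [hup]
  have hindJ : ∀ q : ℝ × ℝ, densE q * J q = E.indicator densE q := by
    intro q
    by_cases h : q ∈ E <;> simp [hJdef, Set.indicator_apply, h]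
  rw [lintegral_congr hindJ, lintegral_indicator hE, withDensity_apply _ hE,
    ← Measure.volume_eq_prod]
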